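/- Let X be a real inner product space, V⁰ ⊆ X a complete subspace, L a real inner product space, ι : X → L a continuous linear map, ν > 0, α > 0 and f, u^d ∈ L. Call a pair (u,q) ∈ V⁰ × L feasible if ν⟨u,φ⟩_X = ⟨f + q, ιφ⟩_L for all φ ∈ V⁰, and define J(v,r) := (1/2)‖ιv − u^d‖_L² + (α/2)‖r‖_L². Then a feasible pair (u,q) satisfies J(u,q) ≤ J(v,r) for all feasible pairs (v,r) if and only if there exists z ∈ V⁰ such that q = −α^{-1/2} ιz and ν⟨φ,z⟩_X − α^{-1/2}⟨ιu, ιφ⟩_L = −α^{-1/2}⟨u^d, ιφ⟩_L for all φ ∈ V⁰. -/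

import Mathlib

open RealInnerProductSpace

private lemma riesz_solve {X L : Type*} [NormedAddCommGroup X] [InnerProductSpace ℝ X]
    [NormedAddCommGroup L] [InnerProductSpace ℝ L]
    (V : Submodule ℝ X) [CompleteSpace V] (ι : X →L[ℝ] L)
    (ν : ℝ) (hν : ν ≠ 0) (w : L) :
    ∃ z ∈ V, ∀ φ ∈ V, ν * ⟪φ, z⟫ = ⟪w, ι φ⟫ := by
  set g : V →L[ℝ] ℝ := ν⁻¹ • ((innerSL ℝ w).comp (ι.comp V.subtypeL)) with hg
  set z : V := (InnerProductSpace.toDual ℝ V).symm g with hzdef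
  refine ⟨(z : X), z.2, ?_⟩
  intro φ hφ
  have h := InnerProductSpace.toDual_symm_apply (𝕜 := ℝ) (y := g) (x := (⟨φ, hφ⟩ : V))
  rw [← hzdef] at h
  have hgval : g (⟨φ, hφ⟩ : V) = ν⁻¹ * ⟪w, ι φ⟫ := by
    simp [hg]
  rw [hgval] at h
  have h2 : ⟪(z : X), φ⟫ = ν⁻¹ * ⟪w, ι φ⟫ := by
    rw [← h]; rfl
  rw [real_inner_comm, h2]
  field_simp

private lemma lin_zero {G Q : ℝ} (hQ : 0 ≤ Q) (h : ∀ t : ℝ, 0 ≤ t * G + t ^ 2 * Q) :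
    G = 0 := by
  by_contra hG
  have hq1 : (0:ℝ) < Q + 1 := by linarith
  have hcpos : (0:ℝ) < (Q + 1)⁻¹ := inv_pos.mpr hq1
  have hcq : (Q + 1)⁻¹ * Q = 1 - (Q + 1)⁻¹ := by field_simp; ring
  have h2 := h (-(G * (Q + 1)⁻¹))
  have hG2 : 0 < G ^ 2 := by positivity
  have h3 : G ^ 2 * (Q + 1)⁻¹ * ((Q + 1)⁻¹ * Q)
      = G ^ 2 * (Q + 1)⁻¹ * (1 - (Q + 1)⁻¹) := by rw [hcq]
  nlinarith [h2, h3, mul_pos hG2 (mul_pos hcpos hcpos)]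

private lemma expand_sq {L : Type*} [NormedAddCommGroup L] [InnerProductSpace ℝ L]
    (a b : L) (t : ℝ) :
    ‖a + t • b‖ ^ 2 = ‖a‖ ^ 2 + 2 * t * ⟪a, b⟫ + t ^ 2 * ‖b‖ ^ 2 := by
  rw [← real_inner_self_eq_norm_sq, ← real_inner_self_eq_norm_sq, ← real_inner_self_eq_norm_sq]
  simp only [inner_add_left, inner_add_right, real_inner_smul_left, real_inner_smul_right,
    real_inner_comm a b]
  ring

theorem optimal_iff_kkt
    {X L : Type*} [NormedAddCommGroup X] [InnerProductSpace ℝ X]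
    [NormedAddCommGroup L] [InnerProductSpace ℝ L]
    (V : Submodule ℝ X) [CompleteSpace V]
    (ι : X →L[ℝ] L)
    (ν α : ℝ) (hν : 0 < ν) (hα : 0 < α) (f ud : L)
    (u : X) (q : L) (huV : u ∈ V)
    (hfeas : ∀ φ ∈ V, ν * ⟪u, φ⟫ = ⟪f + q, ι φ⟫) :
    (∀ (v : X) (r : L), v ∈ V → (∀ φ ∈ V, ν * ⟪v, φ⟫ = ⟪f + r, ι φ⟫) →
        (1 / 2) * ‖ι u - ud‖ ^ 2 + (α / 2) * ‖q‖ ^ 2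
          ≤ (1 / 2) * ‖ι v - ud‖ ^ 2 + (α / 2) * ‖r‖ ^ 2)
      ↔ ∃ z ∈ V, q = -(Real.sqrt α)⁻¹ • ι z ∧
          ∀ φ ∈ V, ν * ⟪φ, z⟫ - (Real.sqrt α)⁻¹ * ⟪ι u, ι φ⟫
            = -(Real.sqrt α)⁻¹ * ⟪ud, ι φ⟫ := by
  set s : ℝ := (Real.sqrt α)⁻¹ with hs_def
  have hsqrt : 0 < Real.sqrt α := Real.sqrt_pos.mpr hα
  have hss : Real.sqrt α * Real.sqrt α = α := Real.mul_self_sqrt hα.le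
  have hs : 0 < s := inv_pos.mpr hsqrt
  have hs1 : Real.sqrt α * s = 1 := mul_inv_cancel₀ hsqrt.ne'
  have has : α * s = Real.sqrt α := by
    rw [hs_def]; field_simp; rw [Real.sq_sqrt hα.le]
  set A : L := ι u - ud with hA
  constructor
  · intro hopt
    obtain ⟨z, hzV, hz⟩ := riesz_solve V ι ν hν.ne' (s • A)
    set p : L := q + s • ι z with hp
    obtain ⟨d, hdV, hd⟩ := riesz_solve V ι ν hν.ne' p
    -- the perturbed pair (u + t•d, q + t•p) is feasible
    have hfeas' : ∀ t : ℝ, ∀ φ ∈ V, ν * ⟪u + t • d, φ⟫ = ⟪f + (q + t • p), ι φ⟫ := by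
      intro t φ hφ
      have h1 := hfeas φ hφ
      have h2 := hd φ hφ
      have hc : ⟪u + t • d, φ⟫ = ⟪u, φ⟫ + t * ⟪φ, d⟫ := by
        rw [inner_add_left, real_inner_smul_left, real_inner_comm d φ]
      have hr : ⟪f + (q + t • p), ι φ⟫ = ⟪f + q, ι φ⟫ + t * ⟪p, ι φ⟫ := by
        simp only [inner_add_left, real_inner_smul_left]; ring
      rw [hc, hr, mul_add, h1, ← h2]; ring
    -- first-order optimality: linear term vanishes along the direction (d, p)
    have hG0 : ⟪A, ι d⟫ + α * ⟪q, p⟫ = 0 := by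
      refine lin_zero (Q := (1/2) * ‖ι d‖ ^ 2 + (α/2) * ‖p‖ ^ 2) (by positivity) ?_
      intro t
      have h := hopt (u + t • d) (q + t • p) (V.add_mem huV (V.smul_mem t hdV)) (hfeas' t)
      have e1 : ι (u + t • d) - ud = A + t • ι d := by
        rw [hA]; simp only [map_add, map_smul]; abel
      rw [e1, expand_sq A (ι d) t, expand_sq q p t] at h
      nlinarith [h]
    -- the adjoint relation forces p = 0
    have h1 : ν * ⟪d, z⟫ = s * ⟪A, ι d⟫ := by
      have := hz d hdV
      rwa [real_inner_smul_left] at this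
    have h2 : ν * ⟪z, d⟫ = ⟪p, ι z⟫ := hd z hzV
    have h3 : ⟪A, ι d⟫ = Real.sqrt α * ⟪p, ι z⟫ := by
      rw [real_inner_comm z d] at h1
      have hsv : s * ⟪A, ι d⟫ = ⟪p, ι z⟫ := by rw [← h1, h2]
      calc ⟪A, ι d⟫ = Real.sqrt α * (s * ⟪A, ι d⟫) := by
            rw [← mul_assoc, hs1, one_mul]
        _ = Real.sqrt α * ⟪p, ι z⟫ := by rw [hsv]
    have key0 : ⟪p, p⟫ = ⟪q, p⟫ + s * ⟪ι z, p⟫ := by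
      conv_lhs => rw [hp]
      rw [inner_add_left, real_inner_smul_left]
    have hpp : ⟪p, p⟫ = 0 := by
      have e : α * ⟪p, p⟫ = α * ⟪q, p⟫ + Real.sqrt α * ⟪p, ι z⟫ := by
        rw [key0, mul_add, ← mul_assoc, has, real_inner_comm (ι z) p]
      rw [← h3] at e
      have e2 : α * ⟪p, p⟫ = ⟪A, ι d⟫ + α * ⟪q, p⟫ := by rw [e]; ring
      rw [hG0] at e2
      exact (mul_eq_zero.mp e2).resolve_left hα.ne'
    have hp0 : p = 0 := inner_self_eq_zero.mp hpp
    have hq : q = -s • ι z := by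
      have hsum : q + s • ι z = 0 := by rw [← hp, hp0]
      rw [neg_smul]
      exact eq_neg_of_add_eq_zero_left hsum
    refine ⟨z, hzV, hq, ?_⟩
    intro φ hφ
    have := hz φ hφ
    rw [real_inner_smul_left, hA, inner_sub_left] at this
    rw [this]; ring
  · rintro ⟨z, hzV, hq, hz⟩ v r hvV hvfeas
    set d : X := v - u with hd
    set e : L := r - q with he
    have hdV : d ∈ V := V.sub_mem hvV huV
    have hdir : ∀ φ ∈ V, ν * ⟪d, φ⟫ = ⟪e, ι φ⟫ := by
      intro φ hφ
      have h1 := hfeas φ hφ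
      have h2 := hvfeas φ hφ
      rw [inner_add_left] at h1 h2
      rw [hd, he, inner_sub_left, inner_sub_left, mul_sub]
      linarith
    have hadj : ν * ⟪d, z⟫ = s * ⟪A, ι d⟫ := by
      have hzd := hz d hdV
      have hexp : ⟪A, ι d⟫ = ⟪ι u, ι d⟫ - ⟪ud, ι d⟫ := by
        rw [hA, inner_sub_left]
      rw [hexp, mul_sub]
      linarith [hzd]
    have hdirz : ν * ⟪d, z⟫ = ⟪e, ι z⟫ := by
      exact hdir z hzV
    have hlin : ⟪A, ι d⟫ + α * ⟪q, e⟫ = 0 := by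
      have hqe : α * ⟪q, e⟫ = -(Real.sqrt α * ⟪e, ι z⟫) := by
        rw [hq, real_inner_smul_left, real_inner_comm (ι z) e, ← has]
        ring
      have hAd : ⟪A, ι d⟫ = Real.sqrt α * ⟪e, ι z⟫ := by
        rw [← hdirz, hadj, ← mul_assoc, hs1, one_mul]
      rw [hqe, hAd]; ring
    have e1 : ι v - ud = A + (1:ℝ) • ι d := by
      rw [hA, hd]; simp only [map_sub, one_smul]; abel
    have e2 : r = q + (1:ℝ) • e := by rw [he]; simp
    rw [e1, e2, expand_sq A (ι d) 1, expand_sq q e 1]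
    nlinarith [sq_nonneg ‖ι d‖, sq_nonneg ‖e‖, hlin, hα.le,
      mul_nonneg hα.le (sq_nonneg ‖e‖)]
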